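/- Let Γ ≤ Aut(T) be a level-transitive branch group and let N ≠ {1} be a normal subgroup of Γ. Then N contains rist_Γ(n)' for some n ≥ 0. -/

import Mathlib

open List

/-- Vertices of the regular rooted tree over alphabet `X`: finite words. -/
abbrev Vtx (X : Type*) := List X

section Tree

variable {X : Type*} [DecidableEq X]

/-- A permutation of the vertex set is a rooted-tree automorphism if it fixes the
root and maps children of a vertex to children of its image. -/
def IsTreeAut (f : Equiv.Perm (Vtx X)) : Prop :=
  f [] = [] ∧ ∀ (w : Vtx X) (x : X), ∃ y : X, f (w ++ [x]) = f w ++ [y]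

/-- The state (section) of `f` at the vertex `w`, as a function on vertices. -/
def stateFun (f : Equiv.Perm (Vtx X)) (w : Vtx X) : Vtx X → Vtx X :=
  fun t => (f (w ++ t)).drop w.length

/-- The rigid stabilizer of the vertex `v` in the full automorphism group:
all permutations moving only (proper or improper) descendants of `v`. -/
def rist (v : Vtx X) : Subgroup (Equiv.Perm (Vtx X)) where
  carrier := {g | ∀ w : Vtx X, ¬ v <+: w → g w = w}
  one_mem' := by intro w _; rfl
  mul_mem' := by
    intro a b ha hb w hw
    have : (a * b) w = a (b w) := rfl
    rw [this, hb w hw, ha w hw]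
  inv_mem' := by
    intro a ha w hw
    have h := ha w hw
    conv_lhs => rw [← h]
    exact Equiv.symm_apply_apply a w

/-- The rigid stabilizer of `v` in `G`. -/
def ristG (G : Subgroup (Equiv.Perm (Vtx X))) (v : Vtx X) :
    Subgroup (Equiv.Perm (Vtx X)) :=
  rist v ⊓ G

/-- The `n`-th level rigid stabilizer of `G`: the subgroup generated by the
rigid stabilizers of all vertices of level `n`. -/
def ristLevel (G : Subgroup (Equiv.Perm (Vtx X))) (n : ℕ) :
    Subgroup (Equiv.Perm (Vtx X)) :=
  ⨆ v ∈ {v : Vtx X | v.length = n}, ristG G v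

/-- The `n`-th level stabilizer of `G`: elements fixing all vertices of level `≤ n`. -/
def stabLevel (G : Subgroup (Equiv.Perm (Vtx X))) (n : ℕ) :
    Subgroup (Equiv.Perm (Vtx X)) :=
  G ⊓ { carrier := {g | ∀ w : Vtx X, w.length ≤ n → g w = w}
        one_mem' := by intro w _; rfl
        mul_mem' := by
          intro a b ha hb w hw
          have : (a * b) w = a (b w) := rfl
          rw [this, hb w hw, ha w hw]
        inv_mem' := by
          intro a ha w hw
          have h := ha w hw
          conv_lhs => rw [← h]
          exact Equiv.symm_apply_apply a w }

/-- Underlying function of the vtr `v*g`. -/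
def vtrFun (v : Vtx X) (g : Vtx X → Vtx X) : Vtx X → Vtx X :=
  fun w => if v <+: w then v ++ g (w.drop v.length) else w

lemma vtr_aux (v : Vtx X) (g h : Vtx X → Vtx X)
    (hgh : ∀ t, h (g t) = t) (w : Vtx X) :
    vtrFun v h (vtrFun v g w) = w := by
  by_cases hp : v <+: w
  · obtain ⟨t, rfl⟩ := hp
    simp [vtrFun, List.drop_left, hgh, List.prefix_append]
  · simp [vtrFun, hp]

/-- The vtr `v*g`: the automorphism acting as `g` on the subtree rooted
at `v` and trivially elsewhere. -/
def vtr (v : Vtx X) (g : Equiv.Perm (Vtx X)) : Equiv.Perm (Vtx X) where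
  toFun := vtrFun v g
  invFun := vtrFun v g.symm
  left_inv := vtr_aux v g g.symm fun t => g.symm_apply_apply t
  right_inv := vtr_aux v g.symm g fun t => g.apply_symm_apply t

lemma vtr_apply (v : Vtx X) (g : Equiv.Perm (Vtx X)) (w : Vtx X) :
    vtr v g w = if v <+: w then v ++ g (w.drop v.length) else w := rfl

/-- `g ↦ v*g` as a group homomorphism. -/
def vtrHom (v : Vtx X) : Equiv.Perm (Vtx X) →* Equiv.Perm (Vtx X) where
  toFun := vtr v
  map_one' := by
    ext w
    by_cases hp : v <+: w
    · obtain ⟨t, rfl⟩ := hp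
      simp [vtr, vtrFun, List.drop_left, List.prefix_append]
    · simp [vtr, vtrFun, hp]
  map_mul' := by
    intro a b
    ext w
    have hmul : (vtr v a * vtr v b) w = vtr v a (vtr v b w) := rfl
    rw [hmul]
    by_cases hp : v <+: w
    · obtain ⟨t, rfl⟩ := hp
      simp [vtr, vtrFun, List.drop_left, List.prefix_append]
    · simp [vtr, vtrFun, hp]

/-- `K` is a branching subgroup of `G`: `K ≤ G` and `v*K ≤ K` for all vertices. -/
def IsBranching (G K : Subgroup (Equiv.Perm (Vtx X))) : Prop :=
  K ≤ G ∧ ∀ v : Vtx X, ∀ g ∈ K, vtr v g ∈ K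

/-- The product `X^n * K` of the translates `v*K` over all vertices of level `n`. -/
def levelProd (K : Subgroup (Equiv.Perm (Vtx X))) (n : ℕ) :
    Subgroup (Equiv.Perm (Vtx X)) :=
  Subgroup.closure {p | ∃ v : Vtx X, v.length = n ∧ ∃ g ∈ K, p = vtr v g}

/-- The group `G⋉v` of states at `v` of the rigid stabilizer:
those `g ∈ G` with `v*g ∈ G`. -/
def pristSub (G : Subgroup (Equiv.Perm (Vtx X))) (v : Vtx X) :
    Subgroup (Equiv.Perm (Vtx X)) :=
  G ⊓ G.comap (vtrHom v)

/-- `G_#`, the intersection of all `G⋉v` (the maximal branching subgroup when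
`G` is regular branch). -/
def Gsharp (G : Subgroup (Equiv.Perm (Vtx X))) : Subgroup (Equiv.Perm (Vtx X)) :=
  ⨅ v : Vtx X, pristSub G v

/-- `G` is self-similar: all states of elements of `G` are (induced by) elements of `G`. -/
def SelfSimilar (G : Subgroup (Equiv.Perm (Vtx X))) : Prop :=
  ∀ g ∈ G, ∀ w : Vtx X, ∃ h ∈ G, ∀ t : Vtx X, h t = stateFun g w t

/-- `G` is level-transitive: transitive on each level of the tree. -/
def LevelTransitive (G : Subgroup (Equiv.Perm (Vtx X))) : Prop :=
  ∀ v w : Vtx X, v.length = w.length → ∃ g ∈ G, g v = w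

/-- `G` is recurrent: the state at `v` of the stabilizer of `v` is all of `G`. -/
def Recurrent (G : Subgroup (Equiv.Perm (Vtx X))) : Prop :=
  ∀ v : Vtx X, ∀ h : Equiv.Perm (Vtx X),
    (h ∈ G ↔ ∃ g ∈ G, g v = v ∧ ∀ t : Vtx X, h t = stateFun g v t)

/-- `G` is a regular branch group (for this action): it has a non-trivial
branching subgroup `K` with all products `X^n*K` of finite index in `G`. -/
def RegularBranch (G : Subgroup (Equiv.Perm (Vtx X))) : Prop :=
  ∃ K : Subgroup (Equiv.Perm (Vtx X)), IsBranching G K ∧ K ≠ ⊥ ∧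
    ∀ n : ℕ, ((levelProd K n).subgroupOf G).FiniteIndex

/-- The subgroup generated by `e`-th powers of elements of `H`. -/
def powSubgroup {P : Type*} [Group P] (H : Subgroup P) (e : ℕ) : Subgroup P :=
  Subgroup.closure {x | ∃ h ∈ H, x = h ^ e}

/-- The normal closure of `g` in the subgroup `Γ`. -/
def nclosure {P : Type*} [Group P] (Γ : Subgroup P) (g : P) : Subgroup P :=
  Subgroup.closure {x | ∃ h ∈ Γ, x = h * g * h⁻¹}

/-- `g` is finite-state: it has only finitely many states. -/
def FiniteState (g : Equiv.Perm (Vtx X)) : Prop :=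
  {f : Vtx X → Vtx X | ∃ w : Vtx X, f = stateFun g w}.Finite

/-- `g` fixes the boundary ray `y`, i.e. it fixes each of its finite prefixes. -/
def fixesRay (g : Equiv.Perm (Vtx X)) (y : ℕ → X) : Prop :=
  ∀ n : ℕ, g ((List.range n).map y) = (List.range n).map y

end Tree

/-- A group satisfies a (non-trivial) group law. -/
def SatisfiesLaw (G : Type*) [Group G] : Prop :=
  ∃ w : FreeGroup ℕ, w ≠ 1 ∧ ∀ φ : FreeGroup ℕ →* G, φ w = 1


section AuxBranch
variable {X : Type*} [DecidableEq X]

lemma aut_prefix {f : Equiv.Perm (Vtx X)} (hf : IsTreeAut f) (u s : Vtx X) :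
    ∃ s' : Vtx X, f (u ++ s) = f u ++ s' ∧ s'.length = s.length := by
  induction s using List.reverseRecOn with
  | nil => exact ⟨[], by simp, rfl⟩
  | append_singleton s x ih =>
    obtain ⟨s', hs', hl⟩ := ih
    obtain ⟨y, hy⟩ := hf.2 (u ++ s) x
    refine ⟨s' ++ [y], ?_, by simp [hl]⟩
    rw [← List.append_assoc, hy, hs', List.append_assoc]

lemma aut_length {f : Equiv.Perm (Vtx X)} (hf : IsTreeAut f) (w : Vtx X) :
    (f w).length = w.length := by
  obtain ⟨s', h, hl⟩ := aut_prefix hf [] w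
  simpa [hf.1, hl] using congrArg List.length h

lemma aut_mono {f : Equiv.Perm (Vtx X)} (hf : IsTreeAut f) {u t : Vtx X}
    (h : u <+: t) : f u <+: f t := by
  obtain ⟨s, rfl⟩ := h
  obtain ⟨s', hs', _⟩ := aut_prefix hf u s
  exact ⟨s', hs'.symm⟩

lemma rist_conj {h g : Equiv.Perm (Vtx X)} (hh : IsTreeAut h) {u v : Vtx X}
    (huv : h u = v) (hg : g ∈ rist u) : h * g * h⁻¹ ∈ rist v := by
  intro w hw
  have h1 : ¬ u <+: (h⁻¹ : Equiv.Perm (Vtx X)) w := by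
    intro hc
    apply hw
    have := aut_mono hh hc
    rwa [huv, Equiv.Perm.inv_def, Equiv.apply_symm_apply] at this
  show h (g ((h⁻¹ : Equiv.Perm (Vtx X)) w)) = w
  rw [hg _ h1, Equiv.Perm.inv_def, Equiv.apply_symm_apply]

lemma not_both_prefix {u v w : Vtx X} (hlen : u.length = v.length) (hne : u ≠ v)
    (hu : u <+: w) (hv : v <+: w) : False := by
  rcases List.prefix_or_prefix_of_prefix hu hv with h | h
  · exact hne (h.eq_of_length hlen)
  · exact hne (h.eq_of_length hlen.symm).symm

lemma rist_maps {u : Vtx X} {a : Equiv.Perm (Vtx X)} (ha : a ∈ rist u) {w : Vtx X}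
    (hw : u <+: w) : u <+: a w := by
  by_contra hc
  have h1 : a (a w) = a w := ha _ hc
  have := a.injective h1
  rw [this] at hc
  exact hc hw

lemma rist_commute {u v : Vtx X} (hlen : u.length = v.length) (hne : u ≠ v)
    {a b : Equiv.Perm (Vtx X)} (ha : a ∈ rist u) (hb : b ∈ rist v) : a * b = b * a := by
  refine Equiv.ext fun w => ?_
  show a (b w) = b (a w)
  by_cases hu : u <+: w
  · have hv : ¬ v <+: w := fun hv => not_both_prefix hlen hne hu hv
    rw [hb _ hv, hb _ fun hv' => not_both_prefix hlen hne (rist_maps ha hu) hv']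
  · by_cases hv : v <+: w
    · rw [ha _ hu, ha _ fun hu' => not_both_prefix hlen hne hu' (rist_maps hb hv)]
    · rw [hb _ hv, ha _ hu, hb _ hv]

end AuxBranch

/-- a non-trivial normal subgroup of a level-transitive branch
group contains the derived subgroup of some level rigid stabilizer. -/
theorem normal_subgroup_contains_ristLevel_commutator
    {X : Type*} [DecidableEq X] [Fintype X]
    (Γ : Subgroup (Equiv.Perm (Vtx X))) (hAut : ∀ g ∈ Γ, IsTreeAut g)
    (hLT : LevelTransitive Γ)
    (hbr : ∀ n : ℕ, ((ristLevel Γ n).subgroupOf Γ).FiniteIndex)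
    (N : Subgroup (Equiv.Perm (Vtx X))) (hNG : N ≤ Γ)
    (hNnorm : ∀ g ∈ Γ, ∀ x ∈ N, g * x * g⁻¹ ∈ N) (hN : N ≠ ⊥) :
    ∃ n : ℕ, ⁅ristLevel Γ n, ristLevel Γ n⁆ ≤ N := by
  -- extract a non-trivial element of N
  obtain ⟨g, hgN, hg1⟩ : ∃ g ∈ N, g ≠ 1 := by
    by_contra hc
    push_neg at hc
    exact hN ((Subgroup.eq_bot_iff_forall N).2 hc)
  have hgΓ : g ∈ Γ := hNG hgN
  have hgAut : IsTreeAut g := hAut g hgΓ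
  obtain ⟨u, hu⟩ : ∃ u : Vtx X, g u ≠ u := by
    by_contra hc
    push_neg at hc
    exact hg1 (Equiv.ext hc)
  set n := u.length with hn
  have hlen' : (g u).length = n := aut_length hgAut u
  -- key step at the moved vertex u
  have step : ∀ ξ ∈ ristG Γ u, ∀ η ∈ ristG Γ u, ξ⁻¹ * η * ξ * η⁻¹ ∈ N := by
    intro ξ hξ η hη
    have hξr : ξ ∈ rist u := (Subgroup.mem_inf.mp hξ).1
    have hξΓ : ξ ∈ Γ := (Subgroup.mem_inf.mp hξ).2
    have hηr : η ∈ rist u := (Subgroup.mem_inf.mp hη).1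
    have hηΓ : η ∈ Γ := (Subgroup.mem_inf.mp hη).2
    set a := g * ξ * g⁻¹ with ha
    have haR : a ∈ rist (g u) := rist_conj hgAut rfl hξr
    have hne : g u ≠ u := hu
    have haη : a * η = η * a := rist_commute (hlen'.trans hn) hne haR hηr
    have hcr : ξ⁻¹ * η * ξ * η⁻¹ ∈ rist u :=
      (rist u).mul_mem ((rist u).mul_mem ((rist u).mul_mem ((rist u).inv_mem hξr) hηr) hξr)
        ((rist u).inv_mem hηr)
    have hac : a * (ξ⁻¹ * η * ξ * η⁻¹) = (ξ⁻¹ * η * ξ * η⁻¹) * a :=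
      rist_commute (hlen'.trans hn) hne haR hcr
    have hxN : a * ξ⁻¹ ∈ N := by
      have heq : a * ξ⁻¹ = g * (ξ * g⁻¹ * ξ⁻¹) := by rw [ha]; group
      rw [heq]
      exact N.mul_mem hgN (hNnorm ξ hξΓ g⁻¹ (N.inv_mem hgN))
    have hcomm : (a * ξ⁻¹) * (η * (a * ξ⁻¹)⁻¹ * η⁻¹) ∈ N :=
      N.mul_mem hxN (hNnorm η hηΓ _ (N.inv_mem hxN))
    have h2 : a⁻¹ * η⁻¹ = η⁻¹ * a⁻¹ := by
      have := congrArg (fun z => z⁻¹) haη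
      simpa [mul_inv_rev] using this.symm
    have heq2 : (a * ξ⁻¹) * (η * (a * ξ⁻¹)⁻¹ * η⁻¹) = ξ⁻¹ * η * ξ * η⁻¹ := by
      calc (a * ξ⁻¹) * (η * (a * ξ⁻¹)⁻¹ * η⁻¹)
          = a * (ξ⁻¹ * η * ξ) * (a⁻¹ * η⁻¹) := by group
        _ = a * (ξ⁻¹ * η * ξ) * (η⁻¹ * a⁻¹) := by rw [h2]
        _ = a * (ξ⁻¹ * η * ξ * η⁻¹) * a⁻¹ := by group
        _ = (ξ⁻¹ * η * ξ * η⁻¹) * a * a⁻¹ := by rw [hac]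
        _ = ξ⁻¹ * η * ξ * η⁻¹ := by group
    rwa [heq2] at hcomm
  have keyu : ∀ ξ ∈ ristG Γ u, ∀ η ∈ ristG Γ u, ξ * η * ξ⁻¹ * η⁻¹ ∈ N := by
    intro ξ hξ η hη
    have := step ξ⁻¹ ((ristG Γ u).inv_mem hξ) η hη
    simpa using this
  -- transport to every vertex of level n by level-transitivity
  have key : ∀ v : Vtx X, v.length = n → ∀ ξ ∈ ristG Γ v, ∀ η ∈ ristG Γ v,
      ξ * η * ξ⁻¹ * η⁻¹ ∈ N := by
    intro v hv ξ hξ η hη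
    obtain ⟨h, hhΓ, hhu⟩ := hLT u v (hn ▸ hv.symm)
    have hhinvΓ : h⁻¹ ∈ Γ := Γ.inv_mem hhΓ
    have hhinvAut : IsTreeAut h⁻¹ := hAut h⁻¹ hhinvΓ
    have hvu : (h⁻¹ : Equiv.Perm (Vtx X)) v = u := by
      rw [← hhu]; exact Equiv.symm_apply_apply h u
    have conjmem : ∀ ζ ∈ ristG Γ v, h⁻¹ * ζ * h ∈ ristG Γ u := by
      intro ζ hζ
      have h1 : h⁻¹ * ζ * (h⁻¹)⁻¹ ∈ rist u :=
        rist_conj hhinvAut hvu (Subgroup.mem_inf.mp hζ).1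
      rw [inv_inv] at h1
      exact Subgroup.mem_inf.mpr ⟨h1, Γ.mul_mem (Γ.mul_mem hhinvΓ (Subgroup.mem_inf.mp hζ).2) hhΓ⟩
    have hmem := keyu _ (conjmem ξ hξ) _ (conjmem η hη)
    have := hNnorm h hhΓ _ hmem
    have heq : h * ((h⁻¹ * ξ * h) * (h⁻¹ * η * h) * (h⁻¹ * ξ * h)⁻¹ * (h⁻¹ * η * h)⁻¹) * h⁻¹
        = ξ * η * ξ⁻¹ * η⁻¹ := by group
    rwa [heq] at this
  -- conclude by induction over the level rigid stabilizer
  refine ⟨n, ?_⟩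
  rw [Subgroup.commutator_le]
  have hmain : ∀ a : Equiv.Perm (Vtx X), a ∈ ristLevel Γ n →
      a ∈ Γ ∧ ∀ b ∈ ristLevel Γ n, a * b * a⁻¹ * b⁻¹ ∈ N := by
    intro a ha
    have ha' : a ∈ ⨆ v : Vtx X, ⨆ _ : v.length = n, ristG Γ v := ha
    refine Subgroup.iSup_induction (C := fun a => a ∈ Γ ∧
      ∀ b ∈ ristLevel Γ n, a * b * a⁻¹ * b⁻¹ ∈ N)
      (fun v => ⨆ _ : v.length = n, ristG Γ v) ha' ?_ ?_ ?_
    · intro v x hx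
      have hx : x ∈ ⨆ _ : v.length = n, ristG Γ v := hx
      by_cases hv : v.length = n
      · rw [iSup_pos hv] at hx
        refine ⟨(Subgroup.mem_inf.mp hx).2, ?_⟩
        intro b hb
        have hb' : b ∈ ⨆ w : Vtx X, ⨆ _ : w.length = n, ristG Γ w := hb
        have : b ∈ Γ ∧ x * b * x⁻¹ * b⁻¹ ∈ N := by
          refine Subgroup.iSup_induction (C := fun b => b ∈ Γ ∧ x * b * x⁻¹ * b⁻¹ ∈ N)
            (fun w => ⨆ _ : w.length = n, ristG Γ w) hb' ?_ ?_ ?_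
          · intro w y hy
            have hy : y ∈ ⨆ _ : w.length = n, ristG Γ w := hy
            by_cases hw : w.length = n
            · rw [iSup_pos hw] at hy
              refine ⟨(Subgroup.mem_inf.mp hy).2, ?_⟩
              by_cases hvw : v = w
              · subst hvw
                exact key v hv x hx y hy
              · have hc : x * y = y * x :=
                  rist_commute (hv.trans hw.symm) hvw
                    (Subgroup.mem_inf.mp hx).1 (Subgroup.mem_inf.mp hy).1
                have : x * y * x⁻¹ * y⁻¹ = 1 := by
                  rw [hc]; group
                rw [this]; exact N.one_mem
            · rw [iSup_neg hw] at hy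
              rw [Subgroup.mem_bot] at hy
              subst hy
              refine ⟨Γ.one_mem, ?_⟩
              simpa using N.one_mem
          · refine ⟨Γ.one_mem, ?_⟩
            simpa using N.one_mem
          · intro b₁ b₂ hb₁ hb₂
            refine ⟨Γ.mul_mem hb₁.1 hb₂.1, ?_⟩
            have heq : x * (b₁ * b₂) * x⁻¹ * (b₁ * b₂)⁻¹
                = (x * b₁ * x⁻¹ * b₁⁻¹) * (b₁ * (x * b₂ * x⁻¹ * b₂⁻¹) * b₁⁻¹) := by group
            rw [heq]
            exact N.mul_mem hb₁.2 (hNnorm b₁ hb₁.1 _ hb₂.2)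
        exact this.2
      · rw [iSup_neg hv] at hx
        rw [Subgroup.mem_bot] at hx
        subst hx
        refine ⟨Γ.one_mem, fun b hb => ?_⟩
        simpa using N.one_mem
    · refine ⟨Γ.one_mem, fun b hb => ?_⟩
      simpa using N.one_mem
    · intro a₁ a₂ ha₁ ha₂
      refine ⟨Γ.mul_mem ha₁.1 ha₂.1, fun b hb => ?_⟩
      have heq : (a₁ * a₂) * b * (a₁ * a₂)⁻¹ * b⁻¹
          = (a₁ * (a₂ * b * a₂⁻¹ * b⁻¹) * a₁⁻¹) * (a₁ * b * a₁⁻¹ * b⁻¹) := by group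
      rw [heq]
      exact N.mul_mem (hNnorm a₁ ha₁.1 _ (ha₂.2 b hb)) (ha₁.2 b hb)
  intro a ha b hb
  rw [commutatorElement_def]
  exact (hmain a ha).2 b hb
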